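/- arXiv:2210.05607 — 2 statements merged into one kernel-verified Lean document; each statement's English description precedes it below -/
import Mathlib

section
/- In the VRADAM (Option A) setting, set Q₈ = (1−β₁)/√(9G² + ε) and Q₉ = (3G²Lm(m−1)/(1−β₁)² + 9G²Lm²)/(2ε). Then for every outer iteration t, every choice of mini-batches, and every starting point, the consecutive outer iterates satisfy F(w̃_{t+1}) − F(w̃_t) ≤ −Q₈ · α_t · m · ‖∇F(w̃_t)‖₂² + Q₉ · α_t². -/
open MeasureTheory

open scoped RealInnerProductSpace

/-- The full-batch objective `F = (1/N) ∑_n f_n`. -/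
noncomputable def fullLoss (d N : ℕ) (f : Fin N → EuclideanSpace ℝ (Fin d) → ℝ) :
    EuclideanSpace ℝ (Fin d) → ℝ :=
  fun x => (1 / (N : ℝ)) * ∑ n, f n x

/-- The mini-batch objective `F^B = (1/b) ∑_{n ∈ B} f_n`. -/
noncomputable def batchLoss (d N : ℕ) (b : ℕ) (f : Fin N → EuclideanSpace ℝ (Fin d) → ℝ)
    (B : Finset (Fin N)) : EuclideanSpace ℝ (Fin d) → ℝ :=
  fun x => (1 / (b : ℝ)) * ∑ n ∈ B, f n x

section Helpers

variable {d : ℕ}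

lemma euc_norm_le_of_coord {x y : EuclideanSpace ℝ (Fin d)} {r : ℝ} (hr : 0 ≤ r)
    (h : ∀ i, |x i| ≤ r * |y i|) : ‖x‖ ≤ r * ‖y‖ := by
  rw [EuclideanSpace.norm_eq, EuclideanSpace.norm_eq, ← Real.sqrt_sq hr,
    ← Real.sqrt_mul (sq_nonneg r)]
  apply Real.sqrt_le_sqrt
  rw [Finset.mul_sum]
  apply Finset.sum_le_sum
  intro i _
  rw [Real.norm_eq_abs, Real.norm_eq_abs]
  calc |x i| ^ 2 ≤ (r * |y i|) ^ 2 := by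
        apply pow_le_pow_left₀ (abs_nonneg _) (h i)
    _ = r ^ 2 * |y i| ^ 2 := by ring

lemma euc_coord_le_norm (x : EuclideanSpace ℝ (Fin d)) (i : Fin d) : |x i| ≤ ‖x‖ := by
  rw [EuclideanSpace.norm_eq, ← Real.sqrt_sq (abs_nonneg (x i))]
  apply Real.sqrt_le_sqrt
  have h : ∀ j ∈ Finset.univ, (0:ℝ) ≤ ‖x j‖ ^ 2 := fun j _ => sq_nonneg _
  calc |x i| ^ 2 = ‖x i‖ ^ 2 := by rw [Real.norm_eq_abs]
    _ ≤ ∑ j, ‖x j‖ ^ 2 := Finset.single_le_sum h (Finset.mem_univ i)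

lemma euc_sum_abs_mul_le (x y : EuclideanSpace ℝ (Fin d)) :
    ∑ i, |x i * y i| ≤ ‖x‖ * ‖y‖ := by
  set x' : EuclideanSpace ℝ (Fin d) := WithLp.toLp 2 (fun i => |x i|) with hx'
  set y' : EuclideanSpace ℝ (Fin d) := WithLp.toLp 2 (fun i => |y i|) with hy'
  have h1 : ∑ i, |x i * y i| = ⟪x', y'⟫ := by
    rw [PiLp.inner_apply]
    exact Finset.sum_congr rfl fun i _ => by
      rw [hx', hy']; simp [abs_mul, RCLike.inner_apply]; ring
  have hnx : ‖x'‖ = ‖x‖ := by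
    rw [EuclideanSpace.norm_eq, EuclideanSpace.norm_eq]
    congr 1
    exact Finset.sum_congr rfl fun i _ => by rw [hx']; simp
  have hny : ‖y'‖ = ‖y‖ := by
    rw [EuclideanSpace.norm_eq, EuclideanSpace.norm_eq]
    congr 1
    exact Finset.sum_congr rfl fun i _ => by rw [hy']; simp
  rw [h1, ← hnx, ← hny]
  exact real_inner_le_norm x' y'

lemma euc_norm_sq_eq (x : EuclideanSpace ℝ (Fin d)) : ‖x‖ ^ 2 = ∑ i, (x i) ^ 2 := by
  rw [EuclideanSpace.norm_eq, Real.sq_sqrt (by positivity)]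
  simp [Real.norm_eq_abs, sq_abs]

lemma sum_range_cast (n : ℕ) : ∑ k ∈ Finset.range n, (k : ℝ) = n * (n - 1) / 2 := by
  induction n with
  | zero => simp
  | succ n ih => rw [Finset.sum_range_succ, ih]; push_cast; ring

variable {E : Type*} [NormedAddCommGroup E] [InnerProductSpace ℝ E] [CompleteSpace E]

lemma hasGradientAt_smul_sum {ι : Type*} (s : Finset ι) (c : ℝ)
    (f : ι → E → ℝ) (hdiff : ∀ n, Differentiable ℝ (f n)) (x : E) :
    HasGradientAt (fun y => c * ∑ n ∈ s, f n y) (c • ∑ n ∈ s, gradient (f n) x) x := by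
  rw [hasGradientAt_iff_hasFDerivAt]
  have h1 : ∀ n ∈ s, HasFDerivAt (f n)
      ((InnerProductSpace.toDual ℝ E) (gradient (f n) x)) x := fun n _ =>
    hasGradientAt_iff_hasFDerivAt.mp ((hdiff n x).hasGradientAt)
  have h2 : HasFDerivAt (fun y => ∑ n ∈ s, f n y)
      (∑ n ∈ s, (InnerProductSpace.toDual ℝ E) (gradient (f n) x)) x :=
    HasFDerivAt.fun_sum h1
  have h3 := h2.const_mul c
  convert h3 using 1
  · rfl
  rw [_root_.map_smul, map_sum]

lemma gradient_smul_sum {ι : Type*} (s : Finset ι) (c : ℝ)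
    (f : ι → E → ℝ) (hdiff : ∀ n, Differentiable ℝ (f n)) (x : E) :
    gradient (fun y => c * ∑ n ∈ s, f n y) x = c • ∑ n ∈ s, gradient (f n) x :=
  (hasGradientAt_smul_sum s c f hdiff x).gradient

lemma descent_lemma (F : E → ℝ) (hF : Differentiable ℝ F) (L : ℝ)
    (hlip : ∀ x y, ‖gradient F x - gradient F y‖ ≤ L * ‖x - y‖) (x y : E) :
    F y ≤ F x + ⟪gradient F x, y - x⟫ + L / 2 * ‖y - x‖ ^ 2 := by
  set u := y - x with hu
  set φ : ℝ → ℝ := fun s => F (x + s • u) - s * ⟪gradient F x, u⟫ - L / 2 * s ^ 2 * ‖u‖ ^ 2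
    with hφ
  have hder : ∀ s : ℝ, HasDerivAt φ
      (⟪gradient F (x + s • u), u⟫ - ⟪gradient F x, u⟫ - L * s * ‖u‖ ^ 2) s := by
    intro s
    have hline : HasDerivAt (fun s : ℝ => x + s • u) u s := by
      simpa using ((hasDerivAt_id s).smul_const u).const_add x
    have hFd : HasFDerivAt F ((InnerProductSpace.toDual ℝ E) (gradient F (x + s • u)))
        (x + s • u) := hasGradientAt_iff_hasFDerivAt.mp ((hF _).hasGradientAt)
    have h1 : HasDerivAt (fun s : ℝ => F (x + s • u)) ⟪gradient F (x + s • u), u⟫ s := by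
      have := hFd.comp_hasDerivAt s hline
      simpa [InnerProductSpace.toDual_apply_apply, Function.comp_def] using this
    have h2 : HasDerivAt (fun s : ℝ => s * ⟪gradient F x, u⟫) ⟪gradient F x, u⟫ s := by
      simpa using (hasDerivAt_id s).mul_const ⟪gradient F x, u⟫
    have h3 : HasDerivAt (fun s : ℝ => L / 2 * s ^ 2 * ‖u‖ ^ 2) (L * s * ‖u‖ ^ 2) s := by
      have hp : HasDerivAt (fun s : ℝ => s ^ 2) (2 * s) s := by
        simpa using hasDerivAt_pow 2 s
      have h4 := (hp.const_mul (L / 2)).mul_const (‖u‖ ^ 2)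
      convert h4 using 1; rfl; rfl; ring
    exact (h1.sub h2).sub h3
  have hanti : AntitoneOn φ (Set.Icc 0 1) := by
    apply antitoneOn_of_deriv_nonpos (convex_Icc 0 1)
    · exact fun s _ => ((hder s).continuousAt).continuousWithinAt
    · exact fun s _ => ((hder s).differentiableAt).differentiableWithinAt
    · intro s hs
      rw [interior_Icc] at hs
      rw [(hder s).deriv]
      have hsub : ⟪gradient F (x + s • u), u⟫ - ⟪gradient F x, u⟫
          = ⟪gradient F (x + s • u) - gradient F x, u⟫ := by rw [inner_sub_left]
      rw [hsub]
      have hb : ⟪gradient F (x + s • u) - gradient F x, u⟫ ≤ L * s * ‖u‖ ^ 2 := by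
        calc ⟪gradient F (x + s • u) - gradient F x, u⟫
            ≤ ‖gradient F (x + s • u) - gradient F x‖ * ‖u‖ := real_inner_le_norm _ _
          _ ≤ L * ‖x + s • u - x‖ * ‖u‖ :=
              mul_le_mul_of_nonneg_right (hlip _ _) (norm_nonneg u)
          _ = L * s * ‖u‖ ^ 2 := by
              rw [add_sub_cancel_left, norm_smul, Real.norm_eq_abs, abs_of_nonneg hs.1.le]
              ring
      linarith
  have h01 := hanti (Set.left_mem_Icc.mpr zero_le_one) (Set.right_mem_Icc.mpr zero_le_one)
    zero_le_one
  simp only [hφ, zero_smul, add_zero, one_smul, zero_mul, sub_zero, one_pow, zero_pow,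
    mul_zero, mul_one, one_mul] at h01
  have hxy : x + u = y := by rw [hu]; abel
  rw [hxy] at h01
  linarith

lemma smul_sum_norm_le {ι : Type*} [NormedSpace ℝ E] (S : Finset ι) (z : ι → E) (b' : ℕ)
    (hcard : S.card = b') (hb' : 0 < b') (G : ℝ) (h : ∀ n ∈ S, ‖z n‖ ≤ G) :
    ‖(1 / (b' : ℝ)) • ∑ n ∈ S, z n‖ ≤ G := by
  have hbpos : (0:ℝ) < b' := by exact_mod_cast hb'
  have h1 : ‖∑ n ∈ S, z n‖ ≤ (b' : ℝ) * G := by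
    calc ‖∑ n ∈ S, z n‖ ≤ ∑ n ∈ S, ‖z n‖ := norm_sum_le S z
      _ ≤ ∑ _n ∈ S, G := Finset.sum_le_sum h
      _ = (b' : ℝ) * G := by rw [Finset.sum_const, nsmul_eq_mul, hcard]
  rw [norm_smul, Real.norm_eq_abs, abs_of_nonneg (by positivity)]
  calc (1 / (b':ℝ)) * ‖∑ n ∈ S, z n‖ ≤ (1 / (b':ℝ)) * ((b':ℝ) * G) :=
        mul_le_mul_of_nonneg_left h1 (by positivity)
    _ = G := by field_simp

end Helpers

set_option maxHeartbeats 2000000 in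
/-- Per-outer-iteration descent bound for VRADAM with resetting (Option A):
with `Q₈ = (1-β₁)/√(9G²+ε)` and `Q₉ = (3G²Lm(m-1)/(1-β₁)² + 9G²Lm²)/(2ε)`, for every
outer iteration `t ≥ 1`, every choice of mini-batches and every starting point,
`F(w̃_{t+1}) - F(w̃_t) ≤ -Q₈ α_t m ‖∇F(w̃_t)‖² + Q₉ α_t²`. -/
theorem vradam_descent_step
    (d N b m : ℕ) (hN : 0 < N) (hb : 0 < b) (hm : 0 < m)
    (f : Fin N → EuclideanSpace ℝ (Fin d) → ℝ) (L G : ℝ) (hL : 0 < L) (hG : 0 < G)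
    (hdiff : ∀ n, Differentiable ℝ (f n))
    (hlip : ∀ n, LipschitzWith (Real.toNNReal L) (gradient (f n)))
    (hbdd : ∀ n x, ‖gradient (f n) x‖ ≤ G)
    (β₁ β₂ ε : ℝ) (hβ₁0 : 0 ≤ β₁) (hβ₁1 : β₁ < 1) (hβ₂0 : 0 ≤ β₂) (hβ₂1 : β₂ < 1)
    (hε : 0 < ε)
    (α : ℕ → ℝ) (hα : ∀ t, 0 < α t)
    (B : ℕ → ℕ → Finset (Fin N)) (hB : ∀ t k, (B t k).card = b)
    (wt : ℕ → EuclideanSpace ℝ (Fin d))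
    (w mm v g : ℕ → ℕ → EuclideanSpace ℝ (Fin d))
    -- VRADAM inner loop with resetting (Option A)
    (hw1 : ∀ t : ℕ, 1 ≤ t → w t 1 = wt t)
    (hm0 : ∀ t, mm t 0 = 0) (hv0 : ∀ t, v t 0 = 0)
    (hg : ∀ t : ℕ, 1 ≤ t → ∀ k ∈ Finset.Icc 1 m,
      g t k = gradient (batchLoss d N b f (B t k)) (w t k)
        - gradient (batchLoss d N b f (B t k)) (wt t)
        + gradient (fullLoss d N f) (wt t))
    (hmrec : ∀ t : ℕ, 1 ≤ t → ∀ k ∈ Finset.Icc 1 m,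
      mm t k = β₁ • mm t (k - 1) + (1 - β₁) • g t k)
    (hvrec : ∀ t : ℕ, 1 ≤ t → ∀ k ∈ Finset.Icc 1 m, ∀ i,
      v t k i = β₂ * v t (k - 1) i + (1 - β₂) * (g t k i) ^ 2)
    (hwrec : ∀ t : ℕ, 1 ≤ t → ∀ k ∈ Finset.Icc 1 m, ∀ i,
      w t (k + 1) i = w t k i -
        α t * (mm t k i / (1 - β₁ ^ k)) / Real.sqrt (v t k i / (1 - β₂ ^ k) + ε))
    (hnext : ∀ t : ℕ, 1 ≤ t → wt (t + 1) = w t (m + 1)) :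
    ∀ t : ℕ, 1 ≤ t →
      fullLoss d N f (wt (t + 1)) - fullLoss d N f (wt t) ≤
        -((1 - β₁) / Real.sqrt (9 * G ^ 2 + ε)) * α t * m *
            ‖gradient (fullLoss d N f) (wt t)‖ ^ 2 +
          ((3 * G ^ 2 * L * m * (m - 1) / (1 - β₁) ^ 2 + 9 * G ^ 2 * L * m ^ 2) / (2 * ε)) *
            (α t) ^ 2 := by
  intro t ht
  -- basic positivity
  have haT : 0 < α t := hα t
  have hεs : (0:ℝ) < Real.sqrt ε := Real.sqrt_pos.mpr hε
  have hγ : (0:ℝ) < Real.sqrt (9 * G ^ 2 + ε) := Real.sqrt_pos.mpr (by positivity)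
  set γ := Real.sqrt (9 * G ^ 2 + ε) with hγdef
  set aT := α t with haTdef
  set c := 3 * G * aT / Real.sqrt ε with hcdef
  have hc : 0 ≤ c := by positivity
  -- gradient formulas
  have hgradB : ∀ (S : Finset (Fin N)) (x : EuclideanSpace ℝ (Fin d)),
      gradient (batchLoss d N b f S) x = (1 / (b:ℝ)) • ∑ n ∈ S, gradient (f n) x := by
    intro S x
    show gradient (fun y => (1 / (b:ℝ)) * ∑ n ∈ S, f n y) x = _
    exact gradient_smul_sum S _ f hdiff x
  have hgradF : ∀ x : EuclideanSpace ℝ (Fin d),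
      gradient (fullLoss d N f) x = (1 / (N:ℝ)) • ∑ n, gradient (f n) x := by
    intro x
    show gradient (fun y => (1 / (N:ℝ)) * ∑ n, f n y) x = _
    exact gradient_smul_sum Finset.univ _ f hdiff x
  have hlipn : ∀ n (x y : EuclideanSpace ℝ (Fin d)),
      ‖gradient (f n) x - gradient (f n) y‖ ≤ L * ‖x - y‖ := by
    intro n x y
    have h := (hlip n).dist_le_mul x y
    rwa [dist_eq_norm, dist_eq_norm, Real.coe_toNNReal L hL.le] at h
  -- norm bounds on gradients
  have hFb : ∀ x, ‖gradient (fullLoss d N f) x‖ ≤ G := by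
    intro x
    rw [hgradF]
    exact smul_sum_norm_le Finset.univ _ N (by simp) hN G (fun n _ => hbdd n x)
  have hBb : ∀ k x, ‖gradient (batchLoss d N b f (B t k)) x‖ ≤ G := by
    intro k x
    rw [hgradB]
    exact smul_sum_norm_le (B t k) _ b (hB t k) hb G (fun n _ => hbdd n x)
  -- Lipschitz bounds
  have hFlip : ∀ x y, ‖gradient (fullLoss d N f) x - gradient (fullLoss d N f) y‖
      ≤ L * ‖x - y‖ := by
    intro x y
    rw [hgradF, hgradF, ← smul_sub, ← Finset.sum_sub_distrib]
    exact smul_sum_norm_le Finset.univ _ N (by simp) hN _ (fun n _ => hlipn n x y)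
  have hBlip : ∀ k x y, ‖gradient (batchLoss d N b f (B t k)) x
      - gradient (batchLoss d N b f (B t k)) y‖ ≤ L * ‖x - y‖ := by
    intro k x y
    rw [hgradB, hgradB, ← smul_sub, ← Finset.sum_sub_distrib]
    exact smul_sum_norm_le (B t k) _ b (hB t k) hb _ (fun n _ => hlipn n x y)
  have hFdiff : Differentiable ℝ (fullLoss d N f) := by
    show Differentiable ℝ (fun y => (1 / (N:ℝ)) * ∑ n, f n y)
    exact (Differentiable.fun_sum (fun n _ => hdiff n)).const_mul _
  set Fx := gradient (fullLoss d N f) (wt t) with hFxdef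
  have hFxb : ‖Fx‖ ≤ G := hFb _
  -- bound on g
  have hgb : ∀ k, 1 ≤ k → k ≤ m → ‖g t k‖ ≤ 3 * G := by
    intro k hk1 hk2
    rw [hg t ht k (Finset.mem_Icc.mpr ⟨hk1, hk2⟩)]
    calc ‖gradient (batchLoss d N b f (B t k)) (w t k)
          - gradient (batchLoss d N b f (B t k)) (wt t)
          + gradient (fullLoss d N f) (wt t)‖
        ≤ ‖gradient (batchLoss d N b f (B t k)) (w t k)
          - gradient (batchLoss d N b f (B t k)) (wt t)‖
          + ‖gradient (fullLoss d N f) (wt t)‖ := norm_add_le _ _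
      _ ≤ (‖gradient (batchLoss d N b f (B t k)) (w t k)‖
          + ‖gradient (batchLoss d N b f (B t k)) (wt t)‖)
          + ‖gradient (fullLoss d N f) (wt t)‖ := by
            have := norm_sub_le (gradient (batchLoss d N b f (B t k)) (w t k))
              (gradient (batchLoss d N b f (B t k)) (wt t))
            linarith
      _ ≤ (G + G) + G := by
            have h1 := hBb k (w t k); have h2 := hBb k (wt t); have h3 := hFb (wt t)
            linarith
      _ = 3 * G := by ring
  -- deviation of g from Fx
  have hgdev : ∀ k, 1 ≤ k → k ≤ m → ‖g t k - Fx‖ ≤ L * ‖w t k - wt t‖ := by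
    intro k hk1 hk2
    have heq : g t k - Fx = gradient (batchLoss d N b f (B t k)) (w t k)
        - gradient (batchLoss d N b f (B t k)) (wt t) := by
      rw [hg t ht k (Finset.mem_Icc.mpr ⟨hk1, hk2⟩), hFxdef]; abel
    rw [heq]
    exact hBlip k _ _
  -- norm bound on mm
  have hmb : ∀ k, k ≤ m → ‖mm t k‖ ≤ (1 - β₁ ^ k) * (3 * G) := by
    intro k
    induction k with
    | zero => intro _; rw [hm0]; simp
    | succ n ih =>
      intro hn
      have hmem : n + 1 ∈ Finset.Icc 1 m := Finset.mem_Icc.mpr ⟨Nat.succ_le_succ n.zero_le, hn⟩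
      have hrec := hmrec t ht (n+1) hmem
      simp only [Nat.add_sub_cancel] at hrec
      rw [hrec]
      have hgn : ‖g t (n+1)‖ ≤ 3 * G := hgb (n+1) (Nat.succ_le_succ n.zero_le) hn
      have ihn := ih (Nat.le_of_succ_le hn)
      calc ‖β₁ • mm t n + (1 - β₁) • g t (n+1)‖
          ≤ ‖β₁ • mm t n‖ + ‖(1 - β₁) • g t (n+1)‖ := norm_add_le _ _
        _ = β₁ * ‖mm t n‖ + (1 - β₁) * ‖g t (n+1)‖ := by
            rw [norm_smul, norm_smul, Real.norm_eq_abs, Real.norm_eq_abs,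
              abs_of_nonneg hβ₁0, abs_of_nonneg (by linarith)]
        _ ≤ β₁ * ((1 - β₁ ^ n) * (3 * G)) + (1 - β₁) * (3 * G) := by
            have h1 : β₁ * ‖mm t n‖ ≤ β₁ * ((1 - β₁ ^ n) * (3 * G)) :=
              mul_le_mul_of_nonneg_left ihn hβ₁0
            have h2 : (1 - β₁) * ‖g t (n+1)‖ ≤ (1 - β₁) * (3 * G) :=
              mul_le_mul_of_nonneg_left hgn (by linarith)
            linarith
        _ = (1 - β₁ ^ (n+1)) * (3 * G) := by rw [pow_succ]; ring
  -- bounds on v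
  have hvb : ∀ k, k ≤ m → ∀ i, 0 ≤ v t k i ∧ v t k i ≤ (1 - β₂ ^ k) * (9 * G ^ 2) := by
    intro k
    induction k with
    | zero =>
      intro _ i
      have : v t 0 i = 0 := by rw [hv0]; rfl
      rw [this]; simp
    | succ n ih =>
      intro hn i
      have hmem : n + 1 ∈ Finset.Icc 1 m := Finset.mem_Icc.mpr ⟨Nat.succ_le_succ n.zero_le, hn⟩
      have hrec := hvrec t ht (n+1) hmem i
      simp only [Nat.add_sub_cancel] at hrec
      have ihn := ih (Nat.le_of_succ_le hn) i
      have hgsq : (g t (n+1) i) ^ 2 ≤ 9 * G ^ 2 := by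
        have h1 : |g t (n+1) i| ≤ 3 * G :=
          le_trans (euc_coord_le_norm _ i) (hgb (n+1) (Nat.succ_le_succ n.zero_le) hn)
        calc (g t (n+1) i) ^ 2 = |g t (n+1) i| ^ 2 := (sq_abs _).symm
          _ ≤ (3 * G) ^ 2 := pow_le_pow_left₀ (abs_nonneg _) h1 2
          _ = 9 * G ^ 2 := by ring
      constructor
      · rw [hrec]
        have : (0:ℝ) ≤ (1 - β₂) * (g t (n+1) i) ^ 2 :=
          mul_nonneg (by linarith) (sq_nonneg _)
        nlinarith [ihn.1]
      · rw [hrec, pow_succ]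
        have h1 : β₂ * v t n i ≤ β₂ * ((1 - β₂ ^ n) * (9 * G ^ 2)) :=
          mul_le_mul_of_nonneg_left ihn.2 hβ₂0
        have h2 : (1 - β₂) * (g t (n+1) i) ^ 2 ≤ (1 - β₂) * (9 * G ^ 2) :=
          mul_le_mul_of_nonneg_left hgsq (by linarith)
        calc β₂ * v t n i + (1 - β₂) * (g t (n+1) i) ^ 2
            ≤ β₂ * ((1 - β₂ ^ n) * (9 * G ^ 2)) + (1 - β₂) * (9 * G ^ 2) := add_le_add h1 h2
          _ = (1 - β₂ ^ n * β₂) * (9 * G ^ 2) := by ring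
  -- positivity of normalizers
  have h1k : ∀ k : ℕ, 1 ≤ k → (0:ℝ) < 1 - β₁ ^ k := by
    intro k hk
    have := pow_lt_one₀ hβ₁0 hβ₁1 (by omega : k ≠ 0)
    linarith
  have h2k : ∀ k : ℕ, 1 ≤ k → (0:ℝ) < 1 - β₂ ^ k := by
    intro k hk
    have := pow_lt_one₀ hβ₂0 hβ₂1 (by omega : k ≠ 0)
    linarith
  -- denominator bounds
  have hDge : ∀ k, 1 ≤ k → k ≤ m → ∀ i,
      Real.sqrt ε ≤ Real.sqrt (v t k i / (1 - β₂ ^ k) + ε) := by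
    intro k hk1 hk2 i
    apply Real.sqrt_le_sqrt
    have := (hvb k hk2 i).1
    have h2 := h2k k hk1
    have : 0 ≤ v t k i / (1 - β₂ ^ k) := div_nonneg this h2.le
    linarith
  have hDle : ∀ k, 1 ≤ k → k ≤ m → ∀ i,
      Real.sqrt (v t k i / (1 - β₂ ^ k) + ε) ≤ γ := by
    intro k hk1 hk2 i
    apply Real.sqrt_le_sqrt
    have h2 := h2k k hk1
    have hv2 := (hvb k hk2 i).2
    have : v t k i / (1 - β₂ ^ k) ≤ 9 * G ^ 2 := by
      rw [div_le_iff₀ h2]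
      calc v t k i ≤ (1 - β₂ ^ k) * (9 * G ^ 2) := hv2
        _ = 9 * G ^ 2 * (1 - β₂ ^ k) := by ring
    linarith
  have hDpos : ∀ k, 1 ≤ k → k ≤ m → ∀ i,
      (0:ℝ) < Real.sqrt (v t k i / (1 - β₂ ^ k) + ε) :=
    fun k hk1 hk2 i => lt_of_lt_of_le hεs (hDge k hk1 hk2 i)
  -- step norm bound
  have hstep : ∀ k, 1 ≤ k → k ≤ m → ‖w t (k+1) - w t k‖ ≤ c := by
    intro k hk1 hk2
    have h1 := h1k k hk1
    set r := aT / ((1 - β₁ ^ k) * Real.sqrt ε) with hrdef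
    have hr : 0 ≤ r := by positivity
    have hcoord : ∀ i, |(w t (k+1) - w t k) i| ≤ r * |mm t k i| := by
      intro i
      have hwi : (w t (k+1) - w t k) i = w t k i -
          aT * (mm t k i / (1 - β₁ ^ k)) / Real.sqrt (v t k i / (1 - β₂ ^ k) + ε)
          - w t k i := by
        have := hwrec t ht k (Finset.mem_Icc.mpr ⟨hk1, hk2⟩) i
        show w t (k+1) i - w t k i = _
        rw [this]
      rw [hwi]
      have hD := hDpos k hk1 hk2 i
      have hDg := hDge k hk1 hk2 i
      have heq : w t k i - aT * (mm t k i / (1 - β₁ ^ k)) /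
          Real.sqrt (v t k i / (1 - β₂ ^ k) + ε) - w t k i
          = -(aT * (mm t k i / (1 - β₁ ^ k)) /
            Real.sqrt (v t k i / (1 - β₂ ^ k) + ε)) := by ring
      rw [heq, abs_neg, abs_div, abs_of_pos hD, abs_mul, abs_of_pos haT, abs_div,
        abs_of_pos h1]
      calc aT * (|mm t k i| / (1 - β₁ ^ k)) / Real.sqrt (v t k i / (1 - β₂ ^ k) + ε)
          ≤ aT * (|mm t k i| / (1 - β₁ ^ k)) / Real.sqrt ε :=
            div_le_div_of_nonneg_left (by positivity) hεs hDg
        _ = r * |mm t k i| := by rw [hrdef]; field_simp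
    have hnorm := euc_norm_le_of_coord hr hcoord
    calc ‖w t (k+1) - w t k‖ ≤ r * ‖mm t k‖ := hnorm
      _ ≤ r * ((1 - β₁ ^ k) * (3 * G)) := mul_le_mul_of_nonneg_left (hmb k hk2) hr
      _ = c := by rw [hrdef, hcdef]; field_simp
  -- distance to anchor
  have hdist : ∀ j, 1 ≤ j → j ≤ m + 1 → ‖w t j - wt t‖ ≤ ((j - 1 : ℕ) : ℝ) * c := by
    intro j
    induction j with
    | zero => intro h; omega
    | succ n ih =>
      intro _ hn
      rcases Nat.eq_zero_or_pos n with h0 | h0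
      · subst h0
        rw [hw1 t ht]
        simp
      · have hn1 : n ≤ m := by omega
        have ihn := ih h0 (by omega)
        have hstepn := hstep n h0 hn1
        have htri : ‖w t (n+1) - wt t‖ ≤ ‖w t (n+1) - w t n‖ + ‖w t n - wt t‖ := by
          have := norm_add_le (w t (n+1) - w t n) (w t n - wt t)
          simpa [sub_add_sub_cancel] using this
        have hcast1 : ((n + 1 - 1 : ℕ) : ℝ) = ((n - 1 : ℕ) : ℝ) + 1 := by
          have : n + 1 - 1 = (n - 1) + 1 := by omega
          rw [this]; push_cast; ring
        rw [hcast1]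
        calc ‖w t (n+1) - wt t‖ ≤ ‖w t (n+1) - w t n‖ + ‖w t n - wt t‖ := htri
          _ ≤ c + ((n - 1 : ℕ) : ℝ) * c := by linarith
          _ = (((n - 1 : ℕ) : ℝ) + 1) * c := by ring
  -- deviation of mm from scaled Fx
  have hmdev : ∀ k, k ≤ m →
      ‖mm t k - (1 - β₁ ^ k) • Fx‖ ≤ L * c * ((k - 1 : ℕ) : ℝ) * (1 - β₁ ^ k) := by
    intro k
    induction k with
    | zero => intro _; rw [hm0]; simp
    | succ n ih =>
      intro hn
      have hmem : n + 1 ∈ Finset.Icc 1 m := Finset.mem_Icc.mpr ⟨Nat.succ_le_succ n.zero_le, hn⟩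
      have hrec := hmrec t ht (n+1) hmem
      simp only [Nat.add_sub_cancel] at hrec
      have hkey : mm t (n+1) - (1 - β₁ ^ (n+1)) • Fx
          = β₁ • (mm t n - (1 - β₁ ^ n) • Fx) + (1 - β₁) • (g t (n+1) - Fx) := by
        rw [hrec, pow_succ]
        module
      have hgdevn : ‖g t (n+1) - Fx‖ ≤ L * ((n : ℝ) * c) := by
        have h1 := hgdev (n+1) (Nat.succ_le_succ n.zero_le) hn
        have h2 := hdist (n+1) (Nat.succ_le_succ n.zero_le) (by omega)
        have hcast : ((n + 1 - 1 : ℕ) : ℝ) = (n : ℝ) := by norm_num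
        rw [hcast] at h2
        calc ‖g t (n+1) - Fx‖ ≤ L * ‖w t (n+1) - wt t‖ := h1
          _ ≤ L * ((n:ℝ) * c) := mul_le_mul_of_nonneg_left h2 hL.le
      have ihn := ih (Nat.le_of_succ_le hn)
      rw [hkey]
      have hLc : (0:ℝ) ≤ L * c := mul_nonneg hL.le hc
      have hcast2 : ((n + 1 - 1 : ℕ) : ℝ) = (n : ℝ) := by norm_num
      rw [hcast2]
      have hb1 : ((n - 1 : ℕ) : ℝ) ≤ (n : ℝ) := by
        have : (n - 1 : ℕ) ≤ n := Nat.sub_le n 1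
        exact_mod_cast this
      have hpn : β₁ ^ n ≤ 1 := pow_le_one₀ hβ₁0 hβ₁1.le
      have hpn0 : 0 ≤ β₁ ^ n := pow_nonneg hβ₁0 n
      calc ‖β₁ • (mm t n - (1 - β₁ ^ n) • Fx) + (1 - β₁) • (g t (n+1) - Fx)‖
          ≤ β₁ * ‖mm t n - (1 - β₁ ^ n) • Fx‖ + (1 - β₁) * ‖g t (n+1) - Fx‖ := by
            have := norm_add_le (β₁ • (mm t n - (1 - β₁ ^ n) • Fx))
              ((1 - β₁) • (g t (n+1) - Fx))
            rw [norm_smul, norm_smul, Real.norm_eq_abs, Real.norm_eq_abs,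
              abs_of_nonneg hβ₁0, abs_of_nonneg (by linarith)] at this
            exact this
        _ ≤ β₁ * (L * c * ((n - 1 : ℕ) : ℝ) * (1 - β₁ ^ n)) + (1 - β₁) * (L * ((n:ℝ) * c)) := by
            have h1 := mul_le_mul_of_nonneg_left ihn hβ₁0
            have h2 := mul_le_mul_of_nonneg_left hgdevn (by linarith : (0:ℝ) ≤ 1 - β₁)
            linarith
        _ ≤ L * c * (n : ℝ) * (1 - β₁ ^ (n+1)) := by
            rw [pow_succ]
            nlinarith [mul_nonneg (mul_nonneg (mul_nonneg hLc hβ₁0)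
              (sub_nonneg.mpr hb1)) (sub_nonneg.mpr hpn)]
  -- per-step descent
  have hstepF : ∀ k, 1 ≤ k → k ≤ m →
      fullLoss d N f (w t (k+1)) - fullLoss d N f (w t k) ≤
        -(aT * ‖Fx‖ ^ 2 / γ) + 12 * G ^ 2 * L * aT ^ 2 / ε * ((k - 1 : ℕ) : ℝ)
          + 9 * G ^ 2 * L * aT ^ 2 / (2 * ε) := by
    intro k hk1 hk2
    have h1 := h1k k hk1
    have hmemk : k ∈ Finset.Icc 1 m := Finset.mem_Icc.mpr ⟨hk1, hk2⟩
    set A := gradient (fullLoss d N f) (w t k) with hAdef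
    set Mv : EuclideanSpace ℝ (Fin d) := (1 - β₁ ^ k)⁻¹ • mm t k with hMvdef
    set D : Fin d → ℝ := fun i => Real.sqrt (v t k i / (1 - β₂ ^ k) + ε) with hDdef
    have hDposk : ∀ i, 0 < D i := hDpos k hk1 hk2
    have hDgek : ∀ i, Real.sqrt ε ≤ D i := hDge k hk1 hk2
    have hDlek : ∀ i, D i ≤ γ := hDle k hk1 hk2
    -- bounds on the pieces
    have hMvb : ‖Mv‖ ≤ 3 * G := by
      rw [hMvdef, norm_smul, Real.norm_eq_abs, abs_of_pos (inv_pos.mpr h1)]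
      calc (1 - β₁ ^ k)⁻¹ * ‖mm t k‖ ≤ (1 - β₁ ^ k)⁻¹ * ((1 - β₁ ^ k) * (3 * G)) :=
            mul_le_mul_of_nonneg_left (hmb k hk2) (inv_pos.mpr h1).le
        _ = 3 * G := by field_simp
    have hMvdev : ‖Mv - Fx‖ ≤ L * c * ((k - 1 : ℕ) : ℝ) := by
      have heq : Mv - Fx = (1 - β₁ ^ k)⁻¹ • (mm t k - (1 - β₁ ^ k) • Fx) := by
        rw [hMvdef, smul_sub, smul_smul, inv_mul_cancel₀ h1.ne', one_smul]
      rw [heq, norm_smul, Real.norm_eq_abs, abs_of_pos (inv_pos.mpr h1)]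
      calc (1 - β₁ ^ k)⁻¹ * ‖mm t k - (1 - β₁ ^ k) • Fx‖
          ≤ (1 - β₁ ^ k)⁻¹ * (L * c * ((k - 1 : ℕ) : ℝ) * (1 - β₁ ^ k)) :=
            mul_le_mul_of_nonneg_left (hmdev k hk2) (inv_pos.mpr h1).le
        _ = L * c * ((k - 1 : ℕ) : ℝ) := by field_simp
    have hAdev : ‖A - Fx‖ ≤ L * c * ((k - 1 : ℕ) : ℝ) := by
      have h2 := hdist k hk1 (by omega)
      calc ‖A - Fx‖ ≤ L * ‖w t k - wt t‖ := hFlip _ _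
        _ ≤ L * (((k - 1 : ℕ) : ℝ) * c) := mul_le_mul_of_nonneg_left h2 hL.le
        _ = L * c * ((k - 1 : ℕ) : ℝ) := by ring
    -- coordinates of the step
    have hΔ : ∀ i, (w t (k+1) - w t k) i = -(aT * Mv i / D i) := by
      intro i
      have hwi := hwrec t ht k hmemk i
      have : (w t (k+1) - w t k) i = w t (k+1) i - w t k i := rfl
      rw [this, hwi, hDdef, hMvdef]
      have : Mv i = (1 - β₁ ^ k)⁻¹ * mm t k i := rfl
      simp only [PiLp.smul_apply, smul_eq_mul]
      field_simp
      rw [← haTdef]; ring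
    -- the inner product bound
    have hinner : ⟪A, w t (k+1) - w t k⟫ ≤
        -(aT * ‖Fx‖ ^ 2 / γ) + 12 * G ^ 2 * L * aT ^ 2 / ε * ((k - 1 : ℕ) : ℝ) := by
      set e : Fin d → ℝ := fun i => (A i - Fx i) * Mv i + Fx i * (Mv i - Fx i) with hedef
      have hsplit : ⟪A, w t (k+1) - w t k⟫
          = -aT * (∑ i, Fx i ^ 2 / D i) + -aT * (∑ i, e i / D i) := by
        rw [PiLp.inner_apply]
        have hterm : ∀ i, (inner ℝ (A i) ((w t (k+1) - w t k) i) : ℝ)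
            = -aT * (Fx i ^ 2 / D i) + -aT * (e i / D i) := by
          intro i
          have hDne : D i ≠ 0 := (hDposk i).ne'
          rw [RCLike.inner_apply, conj_trivial, hΔ i, hedef]
          field_simp
          ring
        rw [Finset.sum_congr rfl (fun i _ => hterm i), Finset.sum_add_distrib,
          ← Finset.mul_sum, ← Finset.mul_sum]
      rw [hsplit]
      -- main descent term
      have hS1 : ‖Fx‖ ^ 2 / γ ≤ ∑ i, Fx i ^ 2 / D i := by
        rw [euc_norm_sq_eq, Finset.sum_div]
        apply Finset.sum_le_sum
        intro i _
        exact div_le_div_of_nonneg_left (sq_nonneg _) (hDposk i) (hDlek i)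
      -- error term
      have hS2 : |∑ i, e i / D i| ≤ 12 * G ^ 2 * L * aT / ε * ((k - 1 : ℕ) : ℝ) := by
        have habs : |∑ i, e i / D i| ≤ ∑ i, |e i| / Real.sqrt ε := by
          calc |∑ i, e i / D i| ≤ ∑ i, |e i / D i| := Finset.abs_sum_le_sum_abs _ _
            _ ≤ ∑ i, |e i| / Real.sqrt ε := by
                apply Finset.sum_le_sum
                intro i _
                rw [abs_div, abs_of_pos (hDposk i)]
                exact div_le_div_of_nonneg_left (abs_nonneg _) hεs (hDgek i)
        have hesum : ∑ i, |e i| ≤ ‖A - Fx‖ * ‖Mv‖ + ‖Fx‖ * ‖Mv - Fx‖ := by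
          calc ∑ i, |e i| ≤ ∑ i, (|(A - Fx) i * Mv i| + |Fx i * (Mv - Fx) i|) := by
                apply Finset.sum_le_sum
                intro i _
                rw [hedef]
                exact abs_add_le _ _
            _ = (∑ i, |(A - Fx) i * Mv i|) + ∑ i, |Fx i * (Mv - Fx) i| :=
                Finset.sum_add_distrib
            _ ≤ ‖A - Fx‖ * ‖Mv‖ + ‖Fx‖ * ‖Mv - Fx‖ := by
                have h1 := euc_sum_abs_mul_le (A - Fx) Mv
                have h2 := euc_sum_abs_mul_le Fx (Mv - Fx)
                linarith
        have hbound : ‖A - Fx‖ * ‖Mv‖ + ‖Fx‖ * ‖Mv - Fx‖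
            ≤ 4 * G * (L * c * ((k - 1 : ℕ) : ℝ)) := by
          have hk0 : (0:ℝ) ≤ ((k - 1 : ℕ) : ℝ) := Nat.cast_nonneg _
          have hLck : (0:ℝ) ≤ L * c * ((k - 1 : ℕ) : ℝ) := by positivity
          have h1 : ‖A - Fx‖ * ‖Mv‖ ≤ (L * c * ((k - 1 : ℕ) : ℝ)) * (3 * G) :=
            mul_le_mul hAdev hMvb (norm_nonneg _) hLck
          have h2 : ‖Fx‖ * ‖Mv - Fx‖ ≤ G * (L * c * ((k - 1 : ℕ) : ℝ)) :=
            mul_le_mul hFxb hMvdev (norm_nonneg _) hG.le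
          nlinarith
        calc |∑ i, e i / D i| ≤ ∑ i, |e i| / Real.sqrt ε := habs
          _ = (∑ i, |e i|) / Real.sqrt ε := by rw [Finset.sum_div]
          _ ≤ (4 * G * (L * c * ((k - 1 : ℕ) : ℝ))) / Real.sqrt ε :=
              div_le_div_of_nonneg_right (le_trans hesum hbound) hεs.le
          _ = 12 * G ^ 2 * L * aT / ε * ((k - 1 : ℕ) : ℝ) := by
              rw [hcdef, ← Real.mul_self_sqrt hε.le]
              field_simp
              rw [Real.sqrt_sq (Real.sqrt_nonneg _)]; ring
      have hterm1 : -aT * (∑ i, Fx i ^ 2 / D i) ≤ -(aT * ‖Fx‖ ^ 2 / γ) := by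
        have h := mul_le_mul_of_nonneg_left hS1 haT.le
        have h2 : -aT * (∑ i, Fx i ^ 2 / D i) = -(aT * (∑ i, Fx i ^ 2 / D i)) := by ring
        rw [h2, mul_div_assoc]
        exact neg_le_neg h
      have hterm2 : -aT * (∑ i, e i / D i) ≤ 12 * G ^ 2 * L * aT ^ 2 / ε * ((k - 1 : ℕ) : ℝ) := by
        have h1 : -aT * (∑ i, e i / D i) ≤ aT * |∑ i, e i / D i| := by
          have := neg_abs_le (∑ i, e i / D i)
          nlinarith
        calc -aT * (∑ i, e i / D i) ≤ aT * |∑ i, e i / D i| := h1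
          _ ≤ aT * (12 * G ^ 2 * L * aT / ε * ((k - 1 : ℕ) : ℝ)) :=
              mul_le_mul_of_nonneg_left hS2 haT.le
          _ = 12 * G ^ 2 * L * aT ^ 2 / ε * ((k - 1 : ℕ) : ℝ) := by ring
      linarith
    -- quadratic term
    have hquad : L / 2 * ‖w t (k+1) - w t k‖ ^ 2 ≤ 9 * G ^ 2 * L * aT ^ 2 / (2 * ε) := by
      have h1 := hstep k hk1 hk2
      have h2 : ‖w t (k+1) - w t k‖ ^ 2 ≤ c ^ 2 :=
        pow_le_pow_left₀ (norm_nonneg _) h1 2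
      have hc2 : c ^ 2 = 9 * G ^ 2 * aT ^ 2 / ε := by
        rw [hcdef, div_pow, Real.sq_sqrt hε.le]
        ring
      calc L / 2 * ‖w t (k+1) - w t k‖ ^ 2 ≤ L / 2 * c ^ 2 :=
            mul_le_mul_of_nonneg_left h2 (by positivity)
        _ = 9 * G ^ 2 * L * aT ^ 2 / (2 * ε) := by rw [hc2]; field_simp
    have hdes := descent_lemma (fullLoss d N f) hFdiff L hFlip (w t k) (w t (k+1))
    have : ⟪gradient (fullLoss d N f) (w t k), w t (k+1) - w t k⟫
        = ⟪A, w t (k+1) - w t k⟫ := rfl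
    rw [this] at hdes
    linarith
  -- telescoping sum
  have htel : fullLoss d N f (wt (t+1)) - fullLoss d N f (wt t)
      = ∑ k ∈ Finset.range m, (fullLoss d N f (w t (k+1+1)) - fullLoss d N f (w t (k+1))) := by
    rw [Finset.sum_range_sub (fun k => fullLoss d N f (w t (k+1)))]
    rw [hnext t ht, hw1 t ht]
  have hsum : ∑ k ∈ Finset.range m,
      (fullLoss d N f (w t (k+1+1)) - fullLoss d N f (w t (k+1)))
      ≤ ∑ k ∈ Finset.range m, (-(aT * ‖Fx‖ ^ 2 / γ)
          + 12 * G ^ 2 * L * aT ^ 2 / ε * (k : ℝ) + 9 * G ^ 2 * L * aT ^ 2 / (2 * ε)) := by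
    apply Finset.sum_le_sum
    intro k hk
    have hkm : k + 1 ≤ m := Finset.mem_range.mp hk
    have h := hstepF (k+1) (Nat.succ_le_succ k.zero_le) hkm
    have hcast : ((k + 1 - 1 : ℕ) : ℝ) = (k : ℝ) := by norm_num
    rw [hcast] at h
    exact h
  have hrhs : ∑ k ∈ Finset.range m, (-(aT * ‖Fx‖ ^ 2 / γ)
        + 12 * G ^ 2 * L * aT ^ 2 / ε * (k : ℝ) + 9 * G ^ 2 * L * aT ^ 2 / (2 * ε))
      = -(m * (aT * ‖Fx‖ ^ 2 / γ)) + 12 * G ^ 2 * L * aT ^ 2 / ε * ((m:ℝ) * ((m:ℝ) - 1) / 2)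
        + (m : ℝ) * (9 * G ^ 2 * L * aT ^ 2 / (2 * ε)) := by
    rw [Finset.sum_add_distrib, Finset.sum_add_distrib, Finset.sum_const, Finset.sum_const,
      ← Finset.mul_sum, sum_range_cast, Finset.card_range, nsmul_eq_mul, nsmul_eq_mul]
    ring
  -- final arithmetic
  have hm1 : (1:ℝ) ≤ (m : ℝ) := by exact_mod_cast hm
  have hP1 : -(((m:ℝ)) * (aT * ‖Fx‖ ^ 2 / γ)) ≤ -((1 - β₁) / γ) * aT * (m:ℝ) * ‖Fx‖ ^ 2 := by
    have hX : (0:ℝ) ≤ aT * (m:ℝ) * ‖Fx‖ ^ 2 / γ := by positivity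
    have h1 : (1 - β₁) * (aT * (m:ℝ) * ‖Fx‖ ^ 2 / γ) ≤ 1 * (aT * (m:ℝ) * ‖Fx‖ ^ 2 / γ) :=
      mul_le_mul_of_nonneg_right (by linarith) hX
    have e1 : -((1 - β₁) / γ) * aT * (m:ℝ) * ‖Fx‖ ^ 2
        = -((1 - β₁) * (aT * (m:ℝ) * ‖Fx‖ ^ 2 / γ)) := by ring
    have e2 : -(((m:ℝ)) * (aT * ‖Fx‖ ^ 2 / γ)) = -(1 * (aT * (m:ℝ) * ‖Fx‖ ^ 2 / γ)) := by
      ring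
    rw [e1, e2]
    linarith
  have hP2 : 12 * G ^ 2 * L * aT ^ 2 / ε * ((m:ℝ) * ((m:ℝ) - 1) / 2)
        + (m : ℝ) * (9 * G ^ 2 * L * aT ^ 2 / (2 * ε))
      ≤ ((3 * G ^ 2 * L * m * ((m:ℝ) - 1) / (1 - β₁) ^ 2 + 9 * G ^ 2 * L * (m:ℝ) ^ 2)
          / (2 * ε)) * aT ^ 2 := by
    have hb2 : (0:ℝ) < (1 - β₁) ^ 2 := pow_pos (by linarith) 2
    have hb2' : (1 - β₁) ^ 2 ≤ 1 := by nlinarith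
    have hXnn : (0:ℝ) ≤ 3 * G ^ 2 * L * (m:ℝ) * ((m:ℝ) - 1) := by
      have : (0:ℝ) ≤ (m:ℝ) - 1 := by linarith
      positivity
    have hkey : 3 * G ^ 2 * L * (m:ℝ) * ((m:ℝ) - 1)
        ≤ 3 * G ^ 2 * L * (m:ℝ) * ((m:ℝ) - 1) / (1 - β₁) ^ 2 := by
      rw [le_div_iff₀ hb2]
      nlinarith
    have hnum : 12 * G ^ 2 * L * (m:ℝ) * ((m:ℝ) - 1) + 9 * G ^ 2 * L * (m:ℝ)
        ≤ 3 * G ^ 2 * L * (m:ℝ) * ((m:ℝ) - 1) / (1 - β₁) ^ 2 + 9 * G ^ 2 * L * (m:ℝ) ^ 2 := by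
      have hexp : 9 * G ^ 2 * L * (m:ℝ) ^ 2
          = 9 * G ^ 2 * L * (m:ℝ) * ((m:ℝ) - 1) + 9 * G ^ 2 * L * (m:ℝ) := by ring
      have h12 : 12 * G ^ 2 * L * (m:ℝ) * ((m:ℝ) - 1)
          = 3 * G ^ 2 * L * (m:ℝ) * ((m:ℝ) - 1) + 9 * G ^ 2 * L * (m:ℝ) * ((m:ℝ) - 1) := by
        ring
      linarith
    have hlhs : 12 * G ^ 2 * L * aT ^ 2 / ε * ((m:ℝ) * ((m:ℝ) - 1) / 2)
        + (m : ℝ) * (9 * G ^ 2 * L * aT ^ 2 / (2 * ε))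
        = ((12 * G ^ 2 * L * (m:ℝ) * ((m:ℝ) - 1) + 9 * G ^ 2 * L * (m:ℝ)) / (2 * ε)) * aT ^ 2 := by
      field_simp
    rw [hlhs]
    apply mul_le_mul_of_nonneg_right _ (sq_nonneg aT)
    exact div_le_div_of_nonneg_right hnum (by positivity : (0:ℝ) ≤ 2 * ε)
  calc fullLoss d N f (wt (t+1)) - fullLoss d N f (wt t)
      = ∑ k ∈ Finset.range m, (fullLoss d N f (w t (k+1+1)) - fullLoss d N f (w t (k+1))) := htel
    _ ≤ ∑ k ∈ Finset.range m, (-(aT * ‖Fx‖ ^ 2 / γ)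
          + 12 * G ^ 2 * L * aT ^ 2 / ε * (k : ℝ) + 9 * G ^ 2 * L * aT ^ 2 / (2 * ε)) := hsum
    _ = -(m * (aT * ‖Fx‖ ^ 2 / γ)) + 12 * G ^ 2 * L * aT ^ 2 / ε * ((m:ℝ) * ((m:ℝ) - 1) / 2)
        + (m : ℝ) * (9 * G ^ 2 * L * aT ^ 2 / (2 * ε)) := hrhs
    _ ≤ -((1 - β₁) / γ) * aT * (m:ℝ) * ‖Fx‖ ^ 2
        + ((3 * G ^ 2 * L * m * ((m:ℝ) - 1) / (1 - β₁) ^ 2 + 9 * G ^ 2 * L * (m:ℝ) ^ 2)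
          / (2 * ε)) * aT ^ 2 := by linarith
end

section
/- Let 0 < A < 1 and B ≥ 0, and let (e_t)_{t≥1} be a sequence of nonnegative reals satisfying e_{t+1} ≤ (1 − A/t)·e_t + B/t² for all t ≥ 1. Then for every T ≥ 2, e_T ≤ T^{−A}·e₁ + B·2^A·((2 − A)/(1 − A))·T^{−A}; in particular e_T = O(T^{−A}). -/
open Finset Real

/-- Bernoulli: `(1+x)^A ≤ 1 + A x` for `0 ≤ A ≤ 1`, `x ≥ -1`. -/
private lemma bern {A x : ℝ} (hA0 : 0 ≤ A) (hA1 : A ≤ 1) (hx : -1 ≤ x) :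
    (1 + x) ^ A ≤ 1 + A * x :=
  rpow_one_add_le_one_add_mul_self hx hA0 hA1

/-- Step inequality for the leading term. -/
private lemma step_ineq {A : ℝ} (hA0 : 0 < A) (hA1 : A < 1) {T : ℕ} (hT : 1 ≤ T) :
    (1 - A / (T : ℝ)) * (T : ℝ) ^ (-A) ≤ ((T : ℝ) + 1) ^ (-A) := by
  have hTpos : (0 : ℝ) < T := by exact_mod_cast hT
  have hAT : A / (T : ℝ) < 1 := by
    rw [div_lt_one hTpos]
    calc A < 1 := hA1
    _ ≤ T := by exact_mod_cast hT
  have h1 : (0 : ℝ) < 1 - A / T := by linarith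
  have hT1pos : (0 : ℝ) < (T : ℝ) + 1 := by linarith
  rw [Real.rpow_neg hTpos.le, Real.rpow_neg hT1pos.le, ← one_div, ← one_div,
    mul_one_div, div_le_div_iff₀ (Real.rpow_pos_of_pos hTpos A) (Real.rpow_pos_of_pos hT1pos A)]
  have hb : ((T : ℝ) + 1) ^ A ≤ (T : ℝ) ^ A * (1 + A / T) := by
    have heq : ((T : ℝ) + 1) = T * (1 + 1 / T) := by field_simp
    have hq : (0:ℝ) ≤ 1 + 1 / (T:ℝ) := by positivity
    rw [heq, Real.mul_rpow hTpos.le hq]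
    have hxm : (-1:ℝ) ≤ 1 / (T:ℝ) := by
      have : (0:ℝ) ≤ 1 / (T:ℝ) := by positivity
      linarith
    have hber := bern hA0.le hA1.le (x := 1 / (T : ℝ)) hxm
    have hmul := mul_le_mul_of_nonneg_left hber (Real.rpow_nonneg hTpos.le A)
    calc (T:ℝ) ^ A * (1 + 1/(T:ℝ)) ^ A ≤ (T:ℝ) ^ A * (1 + A * (1/(T:ℝ))) := hmul
    _ = (T:ℝ) ^ A * (1 + A / T) := by rw [mul_one_div]
  calc (1 - A / T) * ((T : ℝ) + 1) ^ A
      ≤ (1 - A / T) * ((T : ℝ) ^ A * (1 + A / T)) := mul_le_mul_of_nonneg_left hb h1.le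
    _ = (T : ℝ) ^ A * (1 - (A / T) ^ 2) := by ring
    _ ≤ (T : ℝ) ^ A * 1 := by
        apply mul_le_mul_of_nonneg_left _ (Real.rpow_pos_of_pos hTpos A).le
        nlinarith [sq_nonneg (A / (T:ℝ))]
    _ = 1 * (T : ℝ) ^ A := by ring

/-- Discrete integral comparison: `(1-A) n^{A-2} ≤ (n-1)^{A-1} - n^{A-1}` for `n ≥ 2`. -/
private lemma tail_step {A : ℝ} (hA0 : 0 < A) (hA1 : A < 1) {n : ℕ} (hn : 2 ≤ n) :
    (1 - A) * (n : ℝ) ^ (A - 2) ≤ ((n : ℝ) - 1) ^ (A - 1) - (n : ℝ) ^ (A - 1) := by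
  have hnR : (2 : ℝ) ≤ n := by exact_mod_cast hn
  have hnpos : (0 : ℝ) < n := by linarith
  have hm : (0 : ℝ) < (n : ℝ) - 1 := by linarith
  set y : ℝ := 1 / (n : ℝ) with hy
  have hy0 : 0 < y := by positivity
  have hy2 : y ≤ 1 / 2 := by
    rw [hy, div_le_div_iff₀ hnpos (by norm_num)]; linarith
  have hb : (1 - y) ^ (1 - A) ≤ 1 - (1 - A) * y := by
    have h := bern (A := 1 - A) (x := -y) (by linarith) (by linarith) (by linarith)
    calc (1 - y) ^ (1 - A) = (1 + (-y)) ^ (1 - A) := by ring_nf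
    _ ≤ 1 + (1 - A) * (-y) := h
    _ = 1 - (1 - A) * y := by ring
  have hz : (1 - A) * y < 1 := by nlinarith
  have hzpos : 0 < 1 - (1 - A) * y := by linarith
  have h1y : (0:ℝ) < 1 - y := by nlinarith
  have key : 1 + (1 - A) * y ≤ (1 - y) ^ (A - 1) := by
    have hpow : (1 - y) ^ (A - 1) = ((1 - y) ^ (1 - A))⁻¹ := by
      rw [← Real.rpow_neg h1y.le]; congr 1; ring
    have h2 : (0 : ℝ) < (1 - y) ^ (1 - A) := Real.rpow_pos_of_pos h1y _
    have hq : (0:ℝ) < 1 + (1 - A) * y := by nlinarith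
    have step1 : 1 - (1 - A) * y ≤ (1 + (1 - A) * y)⁻¹ := by
      rw [← one_div, le_div_iff₀ hq]
      nlinarith [sq_nonneg ((1 - A) * y)]
    have step2 : (1 - y) ^ (1 - A) ≤ (1 + (1 - A) * y)⁻¹ := hb.trans step1
    have step3 : ((1 + (1 - A) * y)⁻¹)⁻¹ ≤ ((1 - y) ^ (1 - A))⁻¹ :=
      inv_anti₀ h2 step2
    rw [inv_inv] at step3
    rw [hpow]
    exact step3
  have hnm : ((n : ℝ) - 1) ^ (A - 1) = (n : ℝ) ^ (A - 1) * (1 - y) ^ (A - 1) := by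
    rw [← Real.mul_rpow hnpos.le h1y.le]
    congr 1
    rw [hy]
    field_simp
  have hpos : (0 : ℝ) < (n : ℝ) ^ (A - 1) := Real.rpow_pos_of_pos hnpos _
  have hmul := mul_le_mul_of_nonneg_left key hpos.le
  have hA2 : (n : ℝ) ^ (A - 2) = (n : ℝ) ^ (A - 1) * y := by
    rw [hy, mul_one_div, ← Real.rpow_sub_one hnpos.ne']
    ring_nf
  calc (1 - A) * (n : ℝ) ^ (A - 2) = (n:ℝ) ^ (A-1) * (1 + (1-A)*y) - (n:ℝ) ^ (A-1) := by
        rw [hA2]; ring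
  _ ≤ (n:ℝ) ^ (A-1) * (1 - y) ^ (A-1) - (n:ℝ) ^ (A-1) := by linarith
  _ = ((n : ℝ) - 1) ^ (A - 1) - (n : ℝ) ^ (A - 1) := by rw [hnm]

/-- Partial sums `∑_{t=1}^n t^{A-2}` telescoping bound. -/
private lemma sum_tel {A : ℝ} (hA0 : 0 < A) (hA1 : A < 1) :
    ∀ n : ℕ, 1 ≤ n → ∑ t ∈ Icc 1 n, (t : ℝ) ^ (A - 2)
      ≤ 1 + (1 - (n : ℝ) ^ (A - 1)) / (1 - A) := by
  have h1A : (0 : ℝ) < 1 - A := by linarith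
  intro n hn
  induction n, hn using Nat.le_induction with
  | base =>
    simp only [Icc_self, Finset.sum_singleton, Nat.cast_one, Real.one_rpow]
    norm_num
  | succ m hm ih =>
    rw [Finset.sum_Icc_succ_top (by omega)]
    have ht := tail_step hA0 hA1 (n := m + 1) (by omega)
    have hc : ((m + 1 : ℕ) : ℝ) - 1 = (m : ℝ) := by push_cast; ring
    rw [hc] at ht
    have ht' : ((m + 1 : ℕ) : ℝ) ^ (A - 2)
        ≤ ((m : ℝ) ^ (A - 1) - ((m + 1 : ℕ) : ℝ) ^ (A - 1)) / (1 - A) := by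
      rw [le_div_iff₀ h1A]
      nlinarith [ht]
    have goal_eq : 1 + (1 - ((m+1:ℕ) : ℝ) ^ (A - 1)) / (1 - A)
        = (1 + (1 - (m : ℝ) ^ (A - 1)) / (1 - A))
          + ((m : ℝ) ^ (A - 1) - ((m + 1 : ℕ) : ℝ) ^ (A - 1)) / (1 - A) := by
      field_simp
      ring
    rw [goal_eq]
    exact add_le_add ih ht'

private lemma sum_bound {A : ℝ} (hA0 : 0 < A) (hA1 : A < 1) (n : ℕ) :
    ∑ t ∈ Icc 1 n, (t : ℝ) ^ (A - 2) ≤ (2 - A) / (1 - A) := by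
  have h1A : (0 : ℝ) < 1 - A := by linarith
  rcases Nat.eq_zero_or_pos n with rfl | hn
  · rw [show Icc 1 0 = (∅ : Finset ℕ) by rfl, Finset.sum_empty]
    apply div_nonneg <;> linarith
  · have h := sum_tel hA0 hA1 n hn
    have hnpos : (0 : ℝ) < n := by exact_mod_cast hn
    have hpow : (0 : ℝ) ≤ (n : ℝ) ^ (A - 1) := Real.rpow_nonneg hnpos.le _
    have heq : (1 + (1 - (n:ℝ) ^ (A - 1)) / (1 - A)) * (1 - A)
        = 2 - A - (n:ℝ) ^ (A - 1) := by field_simp; ring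
    have : 1 + (1 - (n : ℝ) ^ (A - 1)) / (1 - A) ≤ (2 - A) / (1 - A) := by
      rw [le_div_iff₀ h1A, heq]
      linarith
    linarith

/-- Main inductive estimate. -/
private lemma main_est {A B : ℝ} (hA0 : 0 < A) (hA1 : A < 1) (hB : 0 ≤ B)
    (e : ℕ → ℝ) (he : ∀ t, 0 ≤ e t)
    (hrec : ∀ t : ℕ, 1 ≤ t → e (t + 1) ≤ (1 - A / (t : ℝ)) * e t + B / (t : ℝ) ^ 2) :
    ∀ n : ℕ, 1 ≤ n → e (n + 1) ≤ ((n + 1 : ℕ) : ℝ) ^ (-A) * e 1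
      + B * (2 : ℝ) ^ A * ((n + 1 : ℕ) : ℝ) ^ (-A) * ∑ t ∈ Icc 1 n, (t : ℝ) ^ (A - 2) := by
  intro n hn
  induction n, hn using Nat.le_induction with
  | base =>
    have h := hrec 1 le_rfl
    simp only [Nat.cast_one, Nat.cast_ofNat, Icc_self, Finset.sum_singleton,
      Real.one_rpow, div_one, one_pow] at h ⊢
    have h2 : ((2 : ℕ) : ℝ) = 2 := by norm_num
    rw [h2]
    have hcancel : (2 : ℝ) ^ A * (2 : ℝ) ^ (-A) = 1 := by
      rw [← Real.rpow_add (by norm_num)]; simp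
    have hexp : 1 - A ≤ (2 : ℝ) ^ (-A) := by
      rw [Real.rpow_def_of_pos (by norm_num)]
      have hexp2 := Real.add_one_le_exp (Real.log 2 * -A)
      have hlog : Real.log 2 ≤ 1 := by
        have := Real.log_le_sub_one_of_pos (x := 2) (by norm_num)
        linarith
      nlinarith [hA0.le, mul_le_mul_of_nonneg_right hlog hA0.le, hexp2]
    have he1 := he 1
    calc e 2 ≤ (1 - A) * e 1 + B := by simpa using h
    _ ≤ (2:ℝ) ^ (-A) * e 1 + B * (2:ℝ) ^ A * (2:ℝ) ^ (-A) * 1 := by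
        have : B * (2:ℝ) ^ A * (2:ℝ) ^ (-A) * 1 = B := by
          rw [mul_one, mul_assoc, hcancel, mul_one]
        rw [this]
        have := mul_le_mul_of_nonneg_right hexp he1
        linarith
  | succ m hm ih =>
    have hm1 : (1:ℕ) ≤ m + 1 := by omega
    have h := hrec (m + 1) hm1
    have hmpos : (0 : ℝ) < ((m + 1 : ℕ) : ℝ) := by positivity
    have hAT : A / ((m+1:ℕ) : ℝ) < 1 := by
      rw [div_lt_one hmpos]
      calc A < 1 := hA1
      _ ≤ ((m+1:ℕ):ℝ) := by exact_mod_cast hm1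
    have hfac : (0:ℝ) ≤ 1 - A / ((m+1:ℕ):ℝ) := by linarith
    have hstep := step_ineq hA0 hA1 (T := m + 1) hm1
    have hcast : ((m + 1 : ℕ) : ℝ) + 1 = ((m + 2 : ℕ) : ℝ) := by push_cast; ring
    rw [hcast] at hstep
    -- bound pieces
    have hS : (0:ℝ) ≤ ∑ t ∈ Icc 1 m, (t : ℝ) ^ (A - 2) :=
      Finset.sum_nonneg fun t _ => Real.rpow_nonneg (Nat.cast_nonneg t) _
    have he1 := he 1
    have h2A : (0:ℝ) ≤ (2:ℝ) ^ A := (Real.rpow_pos_of_pos (by norm_num) A).le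
    have hterm : B / ((m+1:ℕ):ℝ) ^ 2
        ≤ B * (2:ℝ) ^ A * ((m+2:ℕ):ℝ) ^ (-A) * ((m+1:ℕ):ℝ) ^ (A - 2) := by
      have hkey : (1:ℝ) ≤ (2:ℝ) ^ A * ((m+2:ℕ):ℝ) ^ (-A) * ((m+1:ℕ):ℝ) ^ A := by
        have hprod : (2:ℝ) ^ A * ((m+1:ℕ):ℝ) ^ A = (2 * ((m+1:ℕ):ℝ)) ^ A :=
          (Real.mul_rpow (by norm_num) hmpos.le).symm
        have hle : ((m+2:ℕ):ℝ) ^ A ≤ (2 * ((m+1:ℕ):ℝ)) ^ A := by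
          apply Real.rpow_le_rpow (by positivity) _ hA0.le
          push_cast; linarith
        have hm2pos : (0:ℝ) < ((m+2:ℕ):ℝ) := by positivity
        have hp2 : (0:ℝ) < ((m+2:ℕ):ℝ) ^ A := Real.rpow_pos_of_pos hm2pos A
        rw [mul_right_comm, hprod, Real.rpow_neg hm2pos.le, ← div_eq_mul_inv,
          le_div_iff₀ hp2, one_mul]
        exact hle
      have hsplit : ((m+1:ℕ):ℝ) ^ (A - 2) = ((m+1:ℕ):ℝ) ^ A / ((m+1:ℕ):ℝ) ^ 2 := by
        rw [div_eq_mul_inv, ← Real.rpow_natCast ((m+1:ℕ):ℝ) 2, ← Real.rpow_neg hmpos.le,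
          ← Real.rpow_add hmpos]
        ring_nf
      rw [hsplit]
      have hsq : (0:ℝ) < ((m+1:ℕ):ℝ) ^ 2 := by positivity
      have h1 : B * (((m+1:ℕ):ℝ) ^ 2)⁻¹
          ≤ B * ((2:ℝ) ^ A * ((m+2:ℕ):ℝ) ^ (-A) * ((m+1:ℕ):ℝ) ^ A) * (((m+1:ℕ):ℝ) ^ 2)⁻¹ := by
        apply mul_le_mul_of_nonneg_right _ (by positivity)
        nth_rewrite 1 [← mul_one B]
        exact mul_le_mul_of_nonneg_left hkey hB
      calc B / ((m+1:ℕ):ℝ) ^ 2 = B * (((m+1:ℕ):ℝ) ^ 2)⁻¹ := by rw [div_eq_mul_inv]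
      _ ≤ B * ((2:ℝ) ^ A * ((m+2:ℕ):ℝ) ^ (-A) * ((m+1:ℕ):ℝ) ^ A) * (((m+1:ℕ):ℝ) ^ 2)⁻¹ := h1
      _ = B * (2:ℝ) ^ A * ((m+2:ℕ):ℝ) ^ (-A) * (((m+1:ℕ):ℝ) ^ A / ((m+1:ℕ):ℝ) ^ 2) := by ring
    have hSsum : ∑ t ∈ Icc 1 (m+1), (t : ℝ) ^ (A - 2)
        = (∑ t ∈ Icc 1 m, (t : ℝ) ^ (A - 2)) + ((m+1:ℕ):ℝ) ^ (A - 2) := by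
      rw [Finset.sum_Icc_succ_top (by omega)]
    calc e (m + 1 + 1)
        ≤ (1 - A / ((m+1:ℕ):ℝ)) * e (m+1) + B / ((m+1:ℕ):ℝ) ^ 2 := h
      _ ≤ (1 - A / ((m+1:ℕ):ℝ)) * (((m+1:ℕ):ℝ) ^ (-A) * e 1
            + B * (2:ℝ) ^ A * ((m+1:ℕ):ℝ) ^ (-A) * ∑ t ∈ Icc 1 m, (t : ℝ) ^ (A - 2))
            + B / ((m+1:ℕ):ℝ) ^ 2 := by
          have := mul_le_mul_of_nonneg_left ih hfac
          linarith
      _ = ((1 - A / ((m+1:ℕ):ℝ)) * ((m+1:ℕ):ℝ) ^ (-A)) * e 1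
          + B * (2:ℝ) ^ A * ((1 - A / ((m+1:ℕ):ℝ)) * ((m+1:ℕ):ℝ) ^ (-A))
            * (∑ t ∈ Icc 1 m, (t : ℝ) ^ (A - 2))
          + B / ((m+1:ℕ):ℝ) ^ 2 := by ring
      _ ≤ ((m+2:ℕ):ℝ) ^ (-A) * e 1
          + B * (2:ℝ) ^ A * ((m+2:ℕ):ℝ) ^ (-A) * (∑ t ∈ Icc 1 m, (t : ℝ) ^ (A - 2))
          + B * (2:ℝ) ^ A * ((m+2:ℕ):ℝ) ^ (-A) * ((m+1:ℕ):ℝ) ^ (A - 2) := by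
          have h1 := mul_le_mul_of_nonneg_right hstep he1
          have h2 := mul_le_mul_of_nonneg_right
            (mul_le_mul_of_nonneg_left hstep (mul_nonneg hB h2A)) hS
          have h3 := hterm
          nlinarith [h1, h2, h3]
      _ = ((m+1+1:ℕ):ℝ) ^ (-A) * e 1
          + B * (2:ℝ) ^ A * ((m+1+1:ℕ):ℝ) ^ (-A) * ∑ t ∈ Icc 1 (m+1), (t : ℝ) ^ (A - 2) := by
          rw [hSsum]
          ring

/-- Recursive contraction estimate: if `0 < A < 1`, `B ≥ 0`, and a nonnegative sequence
satisfies `e_{t+1} ≤ (1 - A/t) e_t + B/t²` for all `t ≥ 1`, then for every `T ≥ 2`,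
`e_T ≤ T^{-A} e₁ + B · 2^A · ((2-A)/(1-A)) · T^{-A}`. -/
theorem recursive_contraction (A B : ℝ) (hA0 : 0 < A) (hA1 : A < 1) (hB : 0 ≤ B)
    (e : ℕ → ℝ) (he : ∀ t, 0 ≤ e t)
    (hrec : ∀ t : ℕ, 1 ≤ t → e (t + 1) ≤ (1 - A / (t : ℝ)) * e t + B / (t : ℝ) ^ 2) :
    ∀ T : ℕ, 2 ≤ T →
      e T ≤ (T : ℝ) ^ (-A) * e 1 + B * (2 : ℝ) ^ A * ((2 - A) / (1 - A)) * (T : ℝ) ^ (-A) := by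
  intro T hT
  obtain ⟨n, rfl⟩ : ∃ n, T = n + 1 := ⟨T - 1, by omega⟩
  have hn : 1 ≤ n := by omega
  have hmain := main_est hA0 hA1 hB e he hrec n hn
  have hsb := sum_bound hA0 hA1 n
  have hpos : (0:ℝ) ≤ B * (2:ℝ) ^ A * ((n+1:ℕ):ℝ) ^ (-A) := by positivity
  have := mul_le_mul_of_nonneg_left hsb hpos
  calc e (n+1) ≤ ((n+1:ℕ):ℝ) ^ (-A) * e 1
      + B * (2:ℝ) ^ A * ((n+1:ℕ):ℝ) ^ (-A) * ∑ t ∈ Icc 1 n, (t : ℝ) ^ (A - 2) := hmain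
  _ ≤ ((n+1:ℕ):ℝ) ^ (-A) * e 1
      + B * (2:ℝ) ^ A * ((n+1:ℕ):ℝ) ^ (-A) * ((2 - A) / (1 - A)) := by linarith
  _ = ((n+1:ℕ):ℝ) ^ (-A) * e 1
      + B * (2:ℝ) ^ A * ((2 - A) / (1 - A)) * ((n+1:ℕ):ℝ) ^ (-A) := by ring
end
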